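/- Let H be a real Hilbert space, 𝒳 ⊆ H, and let 𝒴 ⊆ H be open and convex. Let q(y|x) := exp(−a(x) − b(y) + c·⟨x, y⟩) for (x, y) ∈ 𝒳 × 𝒴, where c > 0, a : 𝒳 → ℝ, and b : 𝒴 → ℝ is continuously differentiable with locally bounded derivative. Let P be a probability measure on 𝒳 such that for every y ∈ 𝒴 there exists r > 0 with ∫ (1 + ‖x‖)²·exp(−a(x) + c·r·‖x‖ + c·⟨x, y⟩) dP(x) < ∞, and assume the support of P is not contained in any affine hyperplane, i.e. P({x : ⟨x, u⟩ = d}) < 1 for every nonzero u ∈ H and every d ∈ ℝ. Then the proto conditional mean f_P(y) := (∫ x·q(y|x) dP(x)) / (∫ q(y|x) dP(x)) has Fréchet differential Df_P(y) positive definite for every y ∈ 𝒴, f_P is injective on 𝒴, and there exists a penalty φ_P : H → ℝ ∪ {+∞} such that for every y ∈ 𝒴, f_P(y) is the unique minimizer of x ↦ (1/2)‖y − x‖² + φ_P(x) over H. -/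

import Mathlib

open MeasureTheory RealInnerProductSpace

/-- The "proto" conditional mean in a real Hilbert space for the proto conditional density `q`
(with `q y x` playing the role of `q(y|x)`) and the prior `P`. -/
noncomputable def protoMean {H : Type*} [NormedAddCommGroup H] [InnerProductSpace ℝ H]
    [CompleteSpace H] [MeasurableSpace H] (q : H → H → ℝ) (P : Measure H) (y : H) : H :=
  (∫ x, q y x ∂P)⁻¹ • ∫ x, q y x • x ∂P

/-- For an exponential-family proto conditional density `q(y|x) = exp(−a(x) − b(y) + c⟨x,y⟩)`
with `c > 0`, `b` C¹ with locally bounded derivative, and a prior `P` satisfying the moment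
condition whose support lies in no affine hyperplane, the proto conditional mean has positive
definite differential, is injective on `𝒴`, and there is a penalty `φ` such that `f_P(y)` is
the unique minimizer of `x ↦ (1/2)‖y − x‖² + φ(x)` for every `y ∈ 𝒴`. -/

theorem aux_sep {H : Type*} [NormedAddCommGroup H] [InnerProductSpace ℝ H]
    [CompleteSpace H] [MeasurableSpace H] [BorelSpace H]
    (P : Measure H) [IsProbabilityMeasure P] (w₀ : H → ℝ)
    (hw₀pos : ∀ x, 0 < w₀ x) (hw₀meas : AEStronglyMeasurable w₀ P)
    (hG : Integrable (fun x => (1 + ‖x‖) ^ 2 * w₀ x) P)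
    (hnd : ∀ u : H, u ≠ 0 → P {x | ⟪x, u⟫ = 0} < 1) :
    TopologicalSpace.SeparableSpace H := by
  obtain ⟨w, b, hb⟩ := exists_hilbertBasis ℝ H
  have honb : Orthonormal ℝ ((↑) : w → H) := hb ▸ b.orthonormal
  set C₀ : ℝ := ∫ x, (1 + ‖x‖) ^ 2 * w₀ x ∂P with hC₀
  set t : w → ℝ := fun j => ∫ x, ⟪x, (j : H)⟫ ^ 2 * w₀ x ∂P with ht
  have hcont : ∀ u : H, Continuous fun x : H => ⟪x, u⟫ :=
    fun u => continuous_id.inner continuous_const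
  have hint : ∀ j : w, Integrable (fun x => ⟪x, (j : H)⟫ ^ 2 * w₀ x) P := by
    intro j
    refine hG.mono' (((hcont _).pow 2).aestronglyMeasurable.mul hw₀meas)
      (Filter.Eventually.of_forall fun x => ?_)
    have h1 : |⟪x, (j : H)⟫| ≤ ‖x‖ := by
      have h2 := abs_real_inner_le_norm x (j : H)
      simpa [honb.1 j] using h2
    have h3 : ⟪x, (j : H)⟫ ^ 2 ≤ ‖x‖ ^ 2 := by nlinarith [abs_nonneg ⟪x, (j : H)⟫, sq_abs ⟪x, (j : H)⟫]
    have h4 : (0:ℝ) ≤ w₀ x := (hw₀pos x).le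
    have h5 : (0:ℝ) ≤ ‖x‖ := norm_nonneg x
    rw [Real.norm_eq_abs, abs_of_nonneg (mul_nonneg (sq_nonneg _) h4)]
    nlinarith
  have hpos : ∀ j : w, 0 < t j := by
    intro j
    have hnn : 0 ≤ t j := integral_nonneg fun x => mul_nonneg (sq_nonneg _) (hw₀pos x).le
    rcases hnn.lt_or_eq with h | h
    · exact h
    · exfalso
      have h0 : ∀ᵐ x ∂P, ⟪x, (j : H)⟫ ^ 2 * w₀ x = 0 :=
        (integral_eq_zero_iff_of_nonneg (fun x => mul_nonneg (sq_nonneg _) (hw₀pos x).le)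
          (hint j)).mp h.symm
      have h1 : ∀ᵐ x ∂P, ⟪x, (j : H)⟫ = 0 := by
        filter_upwards [h0] with x hx
        have := (hw₀pos x).ne'
        have h2 : ⟪x, (j : H)⟫ ^ 2 = 0 := by
          rcases mul_eq_zero.mp hx with h | h
          · exact h
          · exact absurd h this
        exact (pow_eq_zero_iff two_ne_zero).mp h2
      have hms : MeasurableSet {x : H | ⟪x, (j : H)⟫ = 0} :=
        (hcont _).measurable (measurableSet_singleton (0:ℝ))
      have h2 : P {x : H | ⟪x, (j : H)⟫ = 0} = 1 := by
        rw [← prob_compl_eq_zero_iff hms] at *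
        rwa [ae_iff] at h1
      exact absurd h2 (hnd (j : H) (honb.ne_zero j)).ne
  have hsum : ∀ s : Finset w, ∑ j ∈ s, t j ≤ C₀ := by
    intro s
    rw [ht, ← integral_finset_sum s (fun j _ => hint j)]
    refine integral_mono (integrable_finset_sum s fun j _ => hint j) hG fun x => ?_
    have hb2 : ∑ j ∈ s, ⟪x, (j : H)⟫ ^ 2 ≤ ‖x‖ ^ 2 := by
      have := honb.sum_inner_products_le (𝕜 := ℝ) x (s := s)
      simpa [Real.norm_eq_abs, sq_abs, real_inner_comm] using this
    have h4 : (0:ℝ) ≤ w₀ x := (hw₀pos x).le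
    have h5 : (0:ℝ) ≤ ‖x‖ := norm_nonneg x
    calc ∑ j ∈ s, ⟪x, (j : H)⟫ ^ 2 * w₀ x = (∑ j ∈ s, ⟪x, (j : H)⟫ ^ 2) * w₀ x := by
          rw [Finset.sum_mul]
      _ ≤ (1 + ‖x‖) ^ 2 * w₀ x := by nlinarith
  have hfin : ∀ n : ℕ, {j : w | 1/(n+1:ℝ) < t j}.Finite := by
    intro n
    by_contra hinf
    obtain ⟨s, hsub, hcard⟩ :=
      (Set.Infinite.exists_subset_card_eq hinf) (Nat.ceil ((n+1 : ℝ) * C₀) + 1)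
    have h1 : ∑ j ∈ s, t j ≤ C₀ := hsum s
    have h2 : (s.card : ℝ) * (1/(n+1:ℝ)) ≤ ∑ j ∈ s, t j := by
      have := Finset.card_nsmul_le_sum s t (1/(n+1:ℝ))
        (fun j hj => (hsub hj).le)
      simpa [nsmul_eq_mul] using this
    have hnp : (0:ℝ) < n + 1 := by positivity
    have h3 : ((n:ℝ)+1) * C₀ < (s.card : ℝ) := by
      rw [hcard]
      push_cast
      have := Nat.le_ceil ((n+1 : ℝ) * C₀)
      linarith
    have h4 : C₀ < (s.card : ℝ) * (1/(n+1:ℝ)) := by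
      rw [mul_one_div, lt_div_iff₀ hnp]
      nlinarith
    linarith
  have hcw : Countable w := by
    rw [← Set.countable_univ_iff]
    have he : (Set.univ : Set w) = ⋃ n : ℕ, {j : w | 1/(n+1:ℝ) < t j} := by
      ext j
      simp only [Set.mem_univ, Set.mem_iUnion, Set.mem_setOf_eq, true_iff]
      exact exists_nat_one_div_lt (hpos j)
    rw [he]
    exact Set.countable_iUnion fun n => (hfin n).countable
  have hw_ct : (w : Set H).Countable := Set.countable_coe_iff.mp hcw
  have hsep : TopologicalSpace.IsSeparable (Submodule.span ℝ (w : Set H) : Set H) :=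
    hw_ct.isSeparable.span
  have hd : Dense (Submodule.span ℝ (w : Set H) : Set H) := by
    have h := b.dense_span
    rw [hb, Subtype.range_coe] at h
    rw [dense_iff_closure_eq, ← Submodule.topologicalClosure_coe, h, Submodule.top_coe]
  rw [← TopologicalSpace.isSeparable_univ_iff, ← hd.closure_eq]
  exact hsep.closure

set_option maxHeartbeats 1000000 in
set_option synthInstance.maxHeartbeats 1000000 in
theorem stmt14 {H : Type*} [NormedAddCommGroup H] [InnerProductSpace ℝ H]
    [CompleteSpace H] [MeasurableSpace H] [BorelSpace H]
    (X Y : Set H) (hYo : IsOpen Y) (hYc : Convex ℝ Y)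
    (c : ℝ) (hc : 0 < c) (a : H → ℝ) (b : H → ℝ) (b' : H → H)
    (hb : ∀ y ∈ Y, HasGradientAt b (b' y) y) (hb'c : ContinuousOn b' Y)
    (hb'loc : ∀ y ∈ Y, ∃ ε > 0, ∃ M : ℝ, ∀ y' ∈ Y, ‖y' - y‖ < ε → ‖b' y'‖ ≤ M)
    (q : H → H → ℝ) (hq : ∀ y x : H, q y x = Real.exp (-a x - b y + c * ⟪x, y⟫))
    (P : Measure H) [IsProbabilityMeasure P] (hPX : ∀ᵐ x ∂P, x ∈ X)
    (hPint : ∀ y ∈ Y, ∃ r > (0 : ℝ), Integrable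
      (fun x => (1 + ‖x‖) ^ 2 * Real.exp (-a x + c * r * ‖x‖ + c * ⟪x, y⟫)) P)
    (hnd : ∀ u : H, u ≠ 0 → ∀ d : ℝ, P {x | ⟪x, u⟫ = d} < 1) :
    (∃ D : H → H →L[ℝ] H, ∀ y ∈ Y,
      HasFDerivAt (protoMean q P) (D y) y ∧
      (∀ u : H, u ≠ 0 → 0 < ⟪u, D y u⟫)) ∧
    Set.InjOn (protoMean q P) Y ∧
    (∃ φ : H → EReal, ∀ y ∈ Y, ∀ x : H, x ≠ protoMean q P y →
      ((2⁻¹ * ‖y - protoMean q P y‖ ^ 2 : ℝ) : EReal) + φ (protoMean q P y) <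
        ((2⁻¹ * ‖y - x‖ ^ 2 : ℝ) : EReal) + φ x) := by
  classical
  rcases Set.eq_empty_or_nonempty Y with hYe | ⟨y₀, hy₀⟩
  · subst hYe
    exact ⟨⟨fun _ => 0, by simp⟩, by simp [Set.InjOn], ⟨fun _ => ⊤, by simp⟩⟩
  obtain ⟨r₀, hr₀, hG₀⟩ := hPint y₀ hy₀
  -- measurability of the basic weights
  have hcont : ∀ u : H, Continuous fun x : H => (⟪x, u⟫ : ℝ) :=
    fun u => continuous_id.inner continuous_const
  have hA : AEStronglyMeasurable (fun x => Real.exp (-a x)) P := by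
    have h1 := hG₀.1
    have h2 : Continuous fun x : H =>
        ((1 + ‖x‖) ^ 2 * Real.exp (c * r₀ * ‖x‖ + c * ⟪x, y₀⟫))⁻¹ := by
      apply Continuous.inv₀
      · exact ((continuous_const.add continuous_norm).pow 2).mul
          (Real.continuous_exp.comp
            ((continuous_const.mul continuous_norm).add (continuous_const.mul (hcont y₀))))
      · intro x; positivity
    have h3 : (fun x => Real.exp (-a x)) = fun x =>
        ((1 + ‖x‖) ^ 2 * Real.exp (-a x + c * r₀ * ‖x‖ + c * ⟪x, y₀⟫)) *
          ((1 + ‖x‖) ^ 2 * Real.exp (c * r₀ * ‖x‖ + c * ⟪x, y₀⟫))⁻¹ := by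
      funext x
      have hne : ((1 + ‖x‖) ^ 2 : ℝ) ≠ 0 := by positivity
      rw [show -a x + c * r₀ * ‖x‖ + c * ⟪x, y₀⟫
          = -a x + (c * r₀ * ‖x‖ + c * ⟪x, y₀⟫) by ring, Real.exp_add, mul_inv]
      field_simp [Real.exp_ne_zero]
    rw [h3]
    exact h1.mul h2.aestronglyMeasurable
  have hEmeas : ∀ y : H, AEStronglyMeasurable (fun x => Real.exp (-a x + c * ⟪x, y⟫)) P := by
    intro y
    have h3 : (fun x => Real.exp (-a x + c * ⟪x, y⟫))
        = fun x => Real.exp (-a x) * Real.exp (c * ⟪x, y⟫) := by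
      funext x; rw [← Real.exp_add]
    rw [h3]
    exact hA.mul (Real.continuous_exp.comp (continuous_const.mul (hcont y))).aestronglyMeasurable
  -- separability of H
  haveI hsepH : TopologicalSpace.SeparableSpace H := by
    refine aux_sep P (fun x => Real.exp (-a x + c * r₀ * ‖x‖ + c * ⟪x, y₀⟫)) (fun x => Real.exp_pos _)
      ?_ hG₀ (fun u hu => hnd u hu 0)
    have h3 : (fun x => Real.exp (-a x + c * r₀ * ‖x‖ + c * ⟪x, y₀⟫))
        = fun x => Real.exp (-a x) * Real.exp (c * r₀ * ‖x‖ + c * ⟪x, y₀⟫) := by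
      funext x; rw [← Real.exp_add]; ring_nf
    rw [h3]
    exact hA.mul (Real.continuous_exp.comp
      ((continuous_const.mul continuous_norm).add (continuous_const.mul (hcont y₀)))).aestronglyMeasurable
  haveI : SecondCountableTopology H := UniformSpace.secondCountable_of_separable H
  -- basic definitions
  set Ef : H → H → ℝ := fun y x => Real.exp (-a x + c * ⟪x, y⟫) with hEf
  set Z : H → ℝ := fun y => ∫ x, Ef y x ∂P with hZdef
  set Nv : H → H := fun y => ∫ x, Ef y x • x ∂P with hNdef
  set DN : H → H →L[ℝ] H := fun y => ∫ x, (Ef y x • (c • innerSL ℝ x)).smulRight x ∂P with hDNdef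
  set DD : H → H →L[ℝ] H := fun y =>
    (Z y)⁻¹ • DN y + ((-((Z y) ^ 2)⁻¹) • (c • innerSL ℝ (Nv y))).smulRight (Nv y) with hDDdef
  have hproto : protoMean q P = fun y => (Z y)⁻¹ • Nv y := by
    funext y
    have h1 : ∀ x, q y x = Real.exp (-(b y)) * Ef y x := by
      intro x; rw [hq, hEf, ← Real.exp_add]; ring_nf
    have hbne : Real.exp (-(b y)) ≠ 0 := Real.exp_ne_zero _
    show (∫ x, q y x ∂P)⁻¹ • ∫ x, q y x • x ∂P = (Z y)⁻¹ • Nv y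
    simp_rw [h1, mul_smul]
    rw [integral_const_mul, integral_smul, mul_inv, smul_smul]
    congr 1
    field_simp
    rfl
  -- continuity helpers
  have hinnerSLc : Continuous fun v : H => (innerSL ℝ v : H →L[ℝ] ℝ) := (innerSL ℝ).continuous
  have hψc : Continuous fun p : ℝ × H =>
      ((p.1 • ((c : ℝ) • innerSL ℝ p.2)).smulRight p.2 : H →L[ℝ] H) := by
    have h1 : Continuous fun p : ℝ × H => (p.1 • ((c : ℝ) • innerSL ℝ p.2) : H →L[ℝ] ℝ) :=
      continuous_fst.smul ((hinnerSLc.comp continuous_snd).const_smul c)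
    exact isBoundedBilinearMap_smulRight.continuous.comp (h1.prodMk continuous_snd)
  -- the main pointwise analysis
  have key : ∀ y ∈ Y, 0 < Z y ∧ HasFDerivAt Z (c • innerSL ℝ (Nv y)) y ∧
      HasFDerivAt Nv (DN y) y ∧ (∀ u : H, u ≠ 0 → 0 < ⟪u, DD y u⟫) := by
    intro y hy
    obtain ⟨r, hr, hG⟩ := hPint y hy
    set g : H → ℝ := fun x => (1 + ‖x‖) ^ 2 * Real.exp (-a x + c * r * ‖x‖ + c * ⟪x, y⟫)
      with hgdef
    have hG' : Integrable g P := hG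
    have hEpos : ∀ (y' : H) (x : H), 0 < Ef y' x := fun y' x => Real.exp_pos _
    have hdom : ∀ y' ∈ Metric.ball y r, ∀ x : H,
        Ef y' x ≤ Real.exp (-a x + c * r * ‖x‖ + c * ⟪x, y⟫) := by
      intro y' hy' x
      apply Real.exp_le_exp.mpr
      have h1 : ⟪x, y'⟫ - ⟪x, y⟫ = ⟪x, y' - y⟫ := (inner_sub_right x y' y).symm
      have h2 : ⟪x, y' - y⟫ ≤ ‖x‖ * ‖y' - y‖ := real_inner_le_norm x (y' - y)
      have h3 : ‖y' - y‖ ≤ r := by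
        have h := Metric.mem_ball.mp hy'
        rw [dist_eq_norm] at h
        exact h.le
      have h4 : ⟪x, y'⟫ - ⟪x, y⟫ ≤ ‖x‖ * r := by
        rw [h1]; exact h2.trans (mul_le_mul_of_nonneg_left h3 (norm_nonneg x))
      nlinarith [mul_le_mul_of_nonneg_left h4 hc.le]
    have hnorm1 : ∀ x : H, ‖x‖ ≤ (1 + ‖x‖) ^ 2 := fun x => by nlinarith [norm_nonneg x]
    have hone : ∀ x : H, (1 : ℝ) ≤ (1 + ‖x‖) ^ 2 := fun x => by nlinarith [norm_nonneg x]
    have hnorm2 : ∀ x : H, ‖x‖ ^ 2 ≤ (1 + ‖x‖) ^ 2 := fun x => by nlinarith [norm_nonneg x]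
    have hIE : ∀ y' ∈ Metric.ball y r, Integrable (fun x => Ef y' x) P := by
      intro y' hy'
      refine hG'.mono' (hEmeas y') (Filter.Eventually.of_forall fun x => ?_)
      rw [Real.norm_eq_abs, abs_of_pos (hEpos y' x)]
      calc Ef y' x ≤ Real.exp (-a x + c * r * ‖x‖ + c * ⟪x, y⟫) := hdom y' hy' x
        _ ≤ g x := by
            simp only [hgdef]
            nlinarith [Real.exp_pos (-a x + c * r * ‖x‖ + c * ⟪x, y⟫), hone x]
    have hIEx : ∀ y' ∈ Metric.ball y r, Integrable (fun x => Ef y' x • x) P := by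
      intro y' hy'
      refine hG'.mono' ((hEmeas y').smul stronglyMeasurable_id.aestronglyMeasurable)
        (Filter.Eventually.of_forall fun x => ?_)
      rw [norm_smul, Real.norm_eq_abs, abs_of_pos (hEpos y' x)]
      calc Ef y' x * ‖x‖ ≤ Real.exp (-a x + c * r * ‖x‖ + c * ⟪x, y⟫) * ‖x‖ :=
            mul_le_mul_of_nonneg_right (hdom y' hy' x) (norm_nonneg x)
        _ ≤ g x := by
            simp only [hgdef]
            rw [mul_comm ((1 + ‖x‖) ^ 2)]
            exact mul_le_mul_of_nonneg_left (hnorm1 x) (Real.exp_pos _).le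
    have hIF'z : ∀ y' ∈ Metric.ball y r,
        Integrable (fun x => Ef y' x • ((c : ℝ) • innerSL ℝ x)) P := by
      intro y' hy'
      refine (hG'.const_mul c).mono'
        ((hEmeas y').smul ((hinnerSLc.const_smul c).aestronglyMeasurable))
        (Filter.Eventually.of_forall fun x => ?_)
      refine ContinuousLinearMap.opNorm_le_bound _ (by simp only [hgdef]; positivity) fun v => ?_
      simp only [ContinuousLinearMap.smul_apply, innerSL_apply_apply, smul_eq_mul, Real.norm_eq_abs,
        abs_mul, abs_of_pos (hEpos y' x), abs_of_pos hc]
      calc Ef y' x * (c * |⟪x, v⟫|)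
          ≤ Real.exp (-a x + c * r * ‖x‖ + c * ⟪x, y⟫) * (c * (‖x‖ * ‖v‖)) := by
            refine mul_le_mul (hdom y' hy' x) ?_ (by positivity) (Real.exp_pos _).le
            exact mul_le_mul_of_nonneg_left (abs_real_inner_le_norm x v) hc.le
        _ ≤ c * g x * ‖v‖ := by
            simp only [hgdef]
            nlinarith [mul_le_mul_of_nonneg_left
              (mul_le_mul_of_nonneg_left (hnorm1 x) (Real.exp_pos (-a x + c * r * ‖x‖ + c * ⟪x, y⟫)).le)
              (mul_nonneg hc.le (norm_nonneg v))]
    have hbndz : ∀ x : H, ∀ y' ∈ Metric.ball y r,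
        ‖Ef y' x • ((c : ℝ) • innerSL ℝ x)‖ ≤ c * g x := by
      intro x y' hy'
      refine ContinuousLinearMap.opNorm_le_bound _ (by simp only [hgdef]; positivity) fun v => ?_
      simp only [ContinuousLinearMap.smul_apply, innerSL_apply_apply, smul_eq_mul, Real.norm_eq_abs,
        abs_mul, abs_of_pos (hEpos y' x), abs_of_pos hc]
      calc Ef y' x * (c * |⟪x, v⟫|)
          ≤ Real.exp (-a x + c * r * ‖x‖ + c * ⟪x, y⟫) * (c * (‖x‖ * ‖v‖)) := by
            refine mul_le_mul (hdom y' hy' x) ?_ (by positivity) (Real.exp_pos _).le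
            exact mul_le_mul_of_nonneg_left (abs_real_inner_le_norm x v) hc.le
        _ ≤ c * g x * ‖v‖ := by
            simp only [hgdef]
            nlinarith [mul_le_mul_of_nonneg_left
              (mul_le_mul_of_nonneg_left (hnorm1 x) (Real.exp_pos (-a x + c * r * ‖x‖ + c * ⟪x, y⟫)).le)
              (mul_nonneg hc.le (norm_nonneg v))]
    have hIop : ∀ y' ∈ Metric.ball y r,
        Integrable (fun x => (Ef y' x • ((c : ℝ) • innerSL ℝ x)).smulRight x) P := by
      intro y' hy'
      refine (hG'.const_mul c).mono'
        (hψc.comp_aestronglyMeasurable ((hEmeas y').prodMk stronglyMeasurable_id.aestronglyMeasurable))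
        (Filter.Eventually.of_forall fun x => ?_)
      rw [ContinuousLinearMap.norm_smulRight_apply, norm_smul, norm_smul, innerSL_apply_norm,
        Real.norm_eq_abs, abs_of_pos (hEpos y' x), Real.norm_eq_abs, abs_of_pos hc]
      calc Ef y' x * (c * ‖x‖) * ‖x‖
          ≤ Real.exp (-a x + c * r * ‖x‖ + c * ⟪x, y⟫) * (c * ‖x‖) * ‖x‖ := by
            have := mul_le_mul_of_nonneg_right (hdom y' hy' x) (by positivity : (0:ℝ) ≤ c * ‖x‖)
            exact mul_le_mul_of_nonneg_right this (norm_nonneg x)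
        _ ≤ c * g x := by
            simp only [hgdef]
            nlinarith [Real.exp_pos (-a x + c * r * ‖x‖ + c * ⟪x, y⟫), hnorm2 x, hc,
              mul_le_mul_of_nonneg_left (hnorm2 x) (Real.exp_pos (-a x + c * r * ‖x‖ + c * ⟪x, y⟫)).le,
              norm_nonneg x]
    have hbndn : ∀ x : H, ∀ y' ∈ Metric.ball y r,
        ‖(Ef y' x • ((c : ℝ) • innerSL ℝ x)).smulRight x‖ ≤ c * g x := by
      intro x y' hy'
      rw [ContinuousLinearMap.norm_smulRight_apply, norm_smul, norm_smul, innerSL_apply_norm,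
        Real.norm_eq_abs, abs_of_pos (hEpos y' x), Real.norm_eq_abs, abs_of_pos hc]
      calc Ef y' x * (c * ‖x‖) * ‖x‖
          ≤ Real.exp (-a x + c * r * ‖x‖ + c * ⟪x, y⟫) * (c * ‖x‖) * ‖x‖ := by
            have := mul_le_mul_of_nonneg_right (hdom y' hy' x) (by positivity : (0:ℝ) ≤ c * ‖x‖)
            exact mul_le_mul_of_nonneg_right this (norm_nonneg x)
        _ ≤ c * g x := by
            simp only [hgdef]
            nlinarith [Real.exp_pos (-a x + c * r * ‖x‖ + c * ⟪x, y⟫), hnorm2 x, hc,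
              mul_le_mul_of_nonneg_left (hnorm2 x) (Real.exp_pos (-a x + c * r * ‖x‖ + c * ⟪x, y⟫)).le,
              norm_nonneg x]
    have hdiffE : ∀ x : H, ∀ y' ∈ Metric.ball y r,
        HasFDerivAt (fun y'' => Ef y'' x) (Ef y' x • ((c : ℝ) • innerSL ℝ x)) y' := by
      intro x y' _
      have h2 : HasFDerivAt (fun y'' : H => (⟪x, y''⟫ : ℝ)) (innerSL ℝ x) y' :=
        (innerSL ℝ x).hasFDerivAt
      have h1 : HasFDerivAt (fun y'' : H => -a x + c * ⟪x, y''⟫) ((c : ℝ) • innerSL ℝ x) y' :=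
        (h2.const_mul c).const_add (-a x)
      exact h1.exp
    have hZpos : 0 < Z y := by
      have h1 : Function.support (fun x => Ef y x) = Set.univ :=
        Set.eq_univ_of_forall fun x => (hEpos y x).ne'
      refine (integral_pos_iff_support_of_nonneg (fun x => (hEpos y x).le)
        (hIE y (Metric.mem_ball_self hr))).mpr ?_
      rw [h1, measure_univ]
      exact zero_lt_one
    have hZder0 : HasFDerivAt Z (∫ x, Ef y x • ((c : ℝ) • innerSL ℝ x) ∂P) y :=
      hasFDerivAt_integral_of_dominated_of_fderiv_le (Metric.ball_mem_nhds y hr)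
        (Filter.Eventually.of_forall fun y' => hEmeas y') (hIE y (Metric.mem_ball_self hr))
        ((hEmeas y).smul ((hinnerSLc.const_smul c).aestronglyMeasurable))
        (Filter.Eventually.of_forall fun x y' hy' => hbndz x y' hy')
        (hG'.const_mul c)
        (Filter.Eventually.of_forall fun x y' hy' => hdiffE x y' hy')
    have hZD : (∫ x, Ef y x • ((c : ℝ) • innerSL ℝ x) ∂P) = c • innerSL ℝ (Nv y) := by
      apply ContinuousLinearMap.ext; intro v
      rw [ContinuousLinearMap.integral_apply (hIF'z y (Metric.mem_ball_self hr))]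
      simp only [ContinuousLinearMap.smul_apply, innerSL_apply_apply, smul_eq_mul]
      have h5 : (⟪Nv y, v⟫ : ℝ) = ∫ x, Ef y x * ⟪v, x⟫ ∂P := by
        rw [real_inner_comm]
        rw [show (⟪v, Nv y⟫ : ℝ) = ∫ x, ⟪v, Ef y x • x⟫ ∂P from
          (integral_inner (hIEx y (Metric.mem_ball_self hr)) v).symm]
        congr 1; funext x; rw [real_inner_smul_right]
      rw [h5, ← integral_const_mul]
      congr 1; funext x
      rw [real_inner_comm v x]; ring
    have hZder : HasFDerivAt Z (c • innerSL ℝ (Nv y)) y := hZD ▸ hZder0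
    have hNder : HasFDerivAt Nv (DN y) y := by
      refine hasFDerivAt_integral_of_dominated_of_fderiv_le (Metric.ball_mem_nhds y hr)
        (Filter.Eventually.of_forall fun y' =>
          (hEmeas y').smul stronglyMeasurable_id.aestronglyMeasurable)
        (hIEx y (Metric.mem_ball_self hr))
        (hψc.comp_aestronglyMeasurable
          ((hEmeas y).prodMk stronglyMeasurable_id.aestronglyMeasurable))
        (Filter.Eventually.of_forall fun x y' hy' => hbndn x y' hy')
        (hG'.const_mul c)
        (Filter.Eventually.of_forall fun x y' hy' => (hdiffE x y' hy').smul_const x)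
    refine ⟨hZpos, hZder, hNder, ?_⟩
    -- positive definiteness
    intro u hu
    set s : H → ℝ := fun x => ⟪x, u⟫ with hs
    have hsb : ∀ x, |s x| ≤ ‖x‖ * ‖u‖ := fun x => abs_real_inner_le_norm x u
    have hexpbd := fun x => hdom y (Metric.mem_ball_self hr) x
    have hIsE : Integrable (fun x => s x * Ef y x) P := by
      refine (hG'.const_mul ‖u‖).mono' ((hcont u).aestronglyMeasurable.mul (hEmeas y))
        (Filter.Eventually.of_forall fun x => ?_)
      rw [Real.norm_eq_abs, abs_mul, abs_of_pos (hEpos y x)]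
      calc |s x| * Ef y x ≤ (‖x‖ * ‖u‖) * Real.exp (-a x + c * r * ‖x‖ + c * ⟪x, y⟫) :=
            mul_le_mul (hsb x) (hexpbd x) (hEpos y x).le (by positivity)
        _ ≤ ‖u‖ * g x := by
            simp only [hgdef]
            nlinarith [Real.exp_pos (-a x + c * r * ‖x‖ + c * ⟪x, y⟫), hnorm1 x, norm_nonneg u,
              mul_le_mul_of_nonneg_left (hnorm1 x) (Real.exp_pos (-a x + c * r * ‖x‖ + c * ⟪x, y⟫)).le,
              norm_nonneg x]
    have hIs2E : Integrable (fun x => s x ^ 2 * Ef y x) P := by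
      refine (hG'.const_mul (‖u‖ ^ 2)).mono'
        (((hcont u).pow 2).aestronglyMeasurable.mul (hEmeas y))
        (Filter.Eventually.of_forall fun x => ?_)
      rw [Real.norm_eq_abs, abs_mul, abs_of_pos (hEpos y x), abs_pow, sq_abs]
      have h1 : s x ^ 2 ≤ ‖x‖ ^ 2 * ‖u‖ ^ 2 := by
        nlinarith [hsb x, abs_nonneg (s x), sq_abs (s x), norm_nonneg x, norm_nonneg u]
      calc s x ^ 2 * Ef y x ≤ (‖x‖ ^ 2 * ‖u‖ ^ 2) * Real.exp (-a x + c * r * ‖x‖ + c * ⟪x, y⟫) :=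
            mul_le_mul h1 (hexpbd x) (hEpos y x).le (by positivity)
        _ ≤ ‖u‖ ^ 2 * g x := by
            simp only [hgdef]
            nlinarith [Real.exp_pos (-a x + c * r * ‖x‖ + c * ⟪x, y⟫), hnorm2 x, norm_nonneg u,
              mul_le_mul_of_nonneg_left (hnorm2 x) (Real.exp_pos (-a x + c * r * ‖x‖ + c * ⟪x, y⟫)).le,
              norm_nonneg x]
    have hIcsx : Integrable (fun x => (Ef y x * (c * s x)) • x) P := by
      refine (hG'.const_mul (c * ‖u‖)).mono'
        (((hEmeas y).mul ((continuous_const.mul (hcont u)).aestronglyMeasurable)).smul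
          stronglyMeasurable_id.aestronglyMeasurable)
        (Filter.Eventually.of_forall fun x => ?_)
      rw [norm_smul, Real.norm_eq_abs, abs_mul, abs_of_pos (hEpos y x), abs_mul, abs_of_pos hc]
      calc Ef y x * (c * |s x|) * ‖x‖
          ≤ Real.exp (-a x + c * r * ‖x‖ + c * ⟪x, y⟫) * (c * (‖x‖ * ‖u‖)) * ‖x‖ := by
            have h2 := mul_le_mul_of_nonneg_left (hsb x) hc.le
            have h3 := mul_le_mul (hexpbd x) h2 (by positivity) (Real.exp_pos _).le
            exact mul_le_mul_of_nonneg_right h3 (norm_nonneg x)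
        _ ≤ c * ‖u‖ * g x := by
            simp only [hgdef]
            nlinarith [mul_le_mul_of_nonneg_left
              (mul_le_mul_of_nonneg_left (hnorm2 x) (Real.exp_pos (-a x + c * r * ‖x‖ + c * ⟪x, y⟫)).le)
              (mul_nonneg hc.le (norm_nonneg u))]
    set I1 : ℝ := ∫ x, s x * Ef y x ∂P with hI1
    set I2 : ℝ := ∫ x, s x ^ 2 * Ef y x ∂P with hI2
    have hNu : (⟪u, Nv y⟫ : ℝ) = I1 := by
      rw [show (⟪u, Nv y⟫ : ℝ) = ∫ x, ⟪u, Ef y x • x⟫ ∂P from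
        (integral_inner (hIEx y (Metric.mem_ball_self hr)) u).symm, hI1]
      congr 1; funext x
      rw [real_inner_smul_right, real_inner_comm x u]
      exact mul_comm (Ef y x) (s x)
    have hDNu : (⟪u, DN y u⟫ : ℝ) = c * I2 := by
      have h1 : DN y u = ∫ x, ((Ef y x • ((c : ℝ) • innerSL ℝ x)).smulRight x) u ∂P :=
        ContinuousLinearMap.integral_apply (hIop y (Metric.mem_ball_self hr)) u
      have h2 : (fun x => ((Ef y x • ((c : ℝ) • innerSL ℝ x)).smulRight x) u)
          = fun x => (Ef y x * (c * s x)) • x := by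
        funext x
        simp only [ContinuousLinearMap.smulRight_apply, ContinuousLinearMap.smul_apply,
          innerSL_apply_apply, smul_eq_mul, hs]
      rw [h1, h2, show (⟪u, ∫ x, (Ef y x * (c * s x)) • x ∂P⟫ : ℝ)
          = ∫ x, ⟪u, (Ef y x * (c * s x)) • x⟫ ∂P from (integral_inner hIcsx u).symm]
      rw [show (fun x => (⟪u, (Ef y x * (c * s x)) • x⟫ : ℝ))
          = fun x => c * (s x ^ 2 * Ef y x) by
        funext x
        rw [real_inner_smul_right, real_inner_comm x u]
        show Ef y x * (c * s x) * s x = c * (s x ^ 2 * Ef y x)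
        ring]
      rw [integral_const_mul, hI2]
    have hDDapp : (⟪u, DD y u⟫ : ℝ) = (Z y)⁻¹ * (c * I2) - ((Z y) ^ 2)⁻¹ * (c * I1 * I1) := by
      have h1 : DD y u = (Z y)⁻¹ • (DN y u)
          + (-((Z y) ^ 2)⁻¹ * (c * ⟪Nv y, u⟫)) • Nv y := by
        simp only [hDDdef, ContinuousLinearMap.add_apply, ContinuousLinearMap.smul_apply,
          ContinuousLinearMap.smulRight_apply, innerSL_apply_apply, smul_eq_mul]
      rw [h1, inner_add_right, real_inner_smul_right, real_inner_smul_right, hDNu, hNu,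
        real_inner_comm u (Nv y), hNu]
      ring
    set m : ℝ := I1 / Z y with hm
    have hVint : Integrable (fun x => (s x - m) ^ 2 * Ef y x) P := by
      have he : (fun x => (s x - m) ^ 2 * Ef y x)
          = fun x => s x ^ 2 * Ef y x - (2 * m) * (s x * Ef y x) + m ^ 2 * Ef y x := by
        funext x; ring
      rw [he]
      have hf : Integrable (fun x => s x ^ 2 * Ef y x - 2 * m * (s x * Ef y x)) P :=
        hIs2E.sub (hIsE.const_mul (2 * m))
      exact hf.add ((hIE y (Metric.mem_ball_self hr)).const_mul (m ^ 2))
    have hVval : ∫ x, (s x - m) ^ 2 * Ef y x ∂P = I2 - 2 * m * I1 + m ^ 2 * Z y := by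
      have he : (fun x => (s x - m) ^ 2 * Ef y x)
          = fun x => s x ^ 2 * Ef y x - (2 * m) * (s x * Ef y x) + m ^ 2 * Ef y x := by
        funext x; ring
      have hf : Integrable (fun x => s x ^ 2 * Ef y x - 2 * m * (s x * Ef y x)) P :=
        hIs2E.sub (hIsE.const_mul (2 * m))
      rw [he]
      rw [integral_add hf ((hIE y (Metric.mem_ball_self hr)).const_mul (m ^ 2))]
      rw [integral_sub hIs2E (hIsE.const_mul (2 * m))]
      rw [integral_const_mul, integral_const_mul]
    have hVpos : 0 < ∫ x, (s x - m) ^ 2 * Ef y x ∂P := by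
      rcases (integral_nonneg (μ := P) (f := fun x => (s x - m) ^ 2 * Ef y x) fun x => mul_nonneg (sq_nonneg _) (hEpos y x).le).lt_or_eq
        with hlt | heq
      · exact hlt
      · exfalso
        have h0 : ∀ᵐ x ∂P, (s x - m) ^ 2 * Ef y x = 0 :=
          (integral_eq_zero_iff_of_nonneg (fun x => mul_nonneg (sq_nonneg _) (hEpos y x).le)
            hVint).mp heq.symm
        have h1 : ∀ᵐ x ∂P, ⟪x, u⟫ = m := by
          filter_upwards [h0] with x hx
          have h2 : (s x - m) ^ 2 = 0 := by
            rcases mul_eq_zero.mp hx with h | h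
            · exact h
            · exact absurd h (hEpos y x).ne'
          have h3 := sub_eq_zero.mp ((pow_eq_zero_iff two_ne_zero).mp h2)
          rw [hs] at h3
          exact h3
        have hms : MeasurableSet {x : H | ⟪x, u⟫ = m} :=
          (hcont u).measurable (measurableSet_singleton m)
        have h2 : P {x : H | ⟪x, u⟫ = m} = 1 := by
          rw [← prob_compl_eq_zero_iff hms]
          rwa [ae_iff] at h1
        exact absurd h2 (hnd u hu m).ne
    have hkey : I1 ^ 2 < Z y * I2 := by
      have h1 := hVpos
      rw [hVval, hm] at h1
      have h9 : I2 - 2 * (I1 / Z y) * I1 + (I1 / Z y) ^ 2 * Z y = (Z y * I2 - I1 ^ 2) / Z y := by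
        field_simp
        ring
      rw [h9] at h1
      rcases div_pos_iff.mp h1 with ⟨h2, _⟩ | ⟨_, h3⟩
      · linarith
      · linarith
    rw [hDDapp]
    have hfinal : (Z y)⁻¹ * (c * I2) - ((Z y) ^ 2)⁻¹ * (c * I1 * I1)
        = c * (Z y * I2 - I1 ^ 2) / (Z y) ^ 2 := by
      field_simp
    rw [hfinal]
    exact div_pos (mul_pos hc (by linarith)) (pow_pos hZpos 2)
  have hfderiv : ∀ y ∈ Y, HasFDerivAt (fun y' => (Z y')⁻¹ • Nv y') (DD y) y := by
    intro y hy
    have hZp := (key y hy).1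
    have hZd := (key y hy).2.1
    have hNd := (key y hy).2.2.1
    have hinv : HasFDerivAt (fun y' => (Z y')⁻¹)
        ((-((Z y) ^ 2)⁻¹) • (c • innerSL ℝ (Nv y))) y := by
      have h := (hasDerivAt_inv hZp.ne').comp_hasFDerivAt y hZd
      exact h
    exact hinv.smul hNd
  set ψ : H → ℝ := fun y => c⁻¹ * Real.log (Z y) with hψdef
  have seg : ∀ y1, y1 ∈ Y → ∀ y2, y2 ∈ Y → y1 ≠ y2 →
      (⟪y2 - y1, (Z y1)⁻¹ • Nv y1⟫ : ℝ) < ⟪y2 - y1, (Z y2)⁻¹ • Nv y2⟫ ∧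
      (⟪y2 - y1, (Z y1)⁻¹ • Nv y1⟫ : ℝ) < ψ y2 - ψ y1 := by
    intro y1 hy1 y2 hy2 hne
    set u : H := y2 - y1 with hu
    have hu0 : u ≠ 0 := sub_ne_zero.mpr (Ne.symm hne)
    set γ : ℝ → H := fun t => y1 + t • u with hγ
    have hγ0 : γ 0 = y1 := by simp [hγ]
    have hγ1 : γ 1 = y2 := by simp [hγ, hu]
    have hγY : ∀ t ∈ Set.Icc (0:ℝ) 1, γ t ∈ Y := by
      intro t ht
      have h := hYc hy1 hy2 (by linarith [ht.2] : (0:ℝ) ≤ 1 - t) ht.1 (by ring)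
      have h2 : (1 - t) • y1 + t • y2 = γ t := by
        simp only [hγ, hu, sub_smul, one_smul, smul_sub]
        abel
      rwa [h2] at h
    have hγd : ∀ t : ℝ, HasDerivAt γ u t := by
      intro t
      have h := ((hasDerivAt_id t).smul_const u).const_add y1
      simpa [hγ] using h
    set h : ℝ → ℝ := fun t => ⟪u, (Z (γ t))⁻¹ • Nv (γ t)⟫ with hh
    have hfd : ∀ t ∈ Set.Icc (0:ℝ) 1, HasDerivAt h ⟪u, DD (γ t) u⟫ t := by
      intro t ht
      have h1 : HasFDerivAt (fun y' => (Z y')⁻¹ • Nv y') (DD (γ t)) (γ t) :=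
        hfderiv (γ t) (hγY t ht)
      have h2 : HasDerivAt (fun t' => (Z (γ t'))⁻¹ • Nv (γ t')) (DD (γ t) u) t :=
        h1.comp_hasDerivAt t (hγd t)
      have h3 := (innerSL ℝ u).hasFDerivAt.comp_hasDerivAt t h2
      exact h3
    have hmono : StrictMonoOn h (Set.Icc 0 1) := by
      apply strictMonoOn_of_deriv_pos (convex_Icc 0 1)
      · intro t ht
        exact (hfd t ht).continuousAt.continuousWithinAt
      · intro t ht
        rw [interior_Icc] at ht
        rw [(hfd t (Set.mem_Icc_of_Ioo ht)).deriv]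
        exact (key (γ t) (hγY t (Set.mem_Icc_of_Ioo ht))).2.2.2 u hu0
    have hin1 : (0:ℝ) ∈ Set.Icc (0:ℝ) 1 := Set.left_mem_Icc.mpr zero_le_one
    have hin2 : (1:ℝ) ∈ Set.Icc (0:ℝ) 1 := Set.right_mem_Icc.mpr zero_le_one
    have h01 : h 0 < h 1 := hmono hin1 hin2 zero_lt_one
    have hh0 : h 0 = ⟪u, (Z y1)⁻¹ • Nv y1⟫ := by rw [hh]; simp only; rw [hγ0]
    have hh1 : h 1 = ⟪u, (Z y2)⁻¹ • Nv y2⟫ := by rw [hh]; simp only; rw [hγ1]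
    constructor
    · rw [← hh0, ← hh1]; exact h01
    · have hgd : ∀ t ∈ Set.Icc (0:ℝ) 1, HasDerivAt (fun t' => ψ (γ t')) (h t) t := by
        intro t ht
        have hZp := (key (γ t) (hγY t ht)).1
        have hZd := (key (γ t) (hγY t ht)).2.1
        have h2 : HasDerivAt (fun t' => Z (γ t')) ((c • innerSL ℝ (Nv (γ t))) u) t :=
          hZd.comp_hasDerivAt t (hγd t)
        have h3 := (h2.log hZp.ne').const_mul c⁻¹
        have h4 : c⁻¹ * ((c • innerSL ℝ (Nv (γ t))) u / Z (γ t)) = h t := by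
          simp only [ContinuousLinearMap.smul_apply, innerSL_apply_apply, smul_eq_mul, hh]
          rw [real_inner_smul_right, real_inner_comm (Nv (γ t)) u]
          field_simp
        rw [h4] at h3
        exact h3
      obtain ⟨ξ, hξ, hslope⟩ := exists_hasDerivAt_eq_slope (fun t => ψ (γ t)) h zero_lt_one
        (fun t ht => (hgd t ht).continuousAt.continuousWithinAt)
        (fun t ht => hgd t (Set.mem_Icc_of_Ioo ht))
      have h5 : h 0 < h ξ := hmono hin1 (Set.mem_Icc_of_Ioo hξ) hξ.1
      rw [hslope] at h5
      simp only [hγ0, hγ1] at h5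
      calc (⟪u, (Z y1)⁻¹ • Nv y1⟫ : ℝ) = h 0 := hh0.symm
        _ < (ψ y2 - ψ y1) / (1 - 0) := h5
        _ = ψ y2 - ψ y1 := by norm_num
  have hinj : Set.InjOn (fun y => (Z y)⁻¹ • Nv y) Y := by
    intro y1 h1 y2 h2 he
    by_contra hne
    have h3 := (seg y1 h1 y2 h2 hne).1
    simp only at he
    rw [he] at h3
    exact lt_irrefl _ h3
  rw [hproto]
  refine ⟨⟨DD, fun y hy => ⟨hfderiv y hy, (key y hy).2.2.2⟩⟩, hinj, ?_⟩
  refine ⟨fun x => if hx : ∃ z, z ∈ Y ∧ (Z z)⁻¹ • Nv z = x then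
      (((⟪x, Classical.choose hx⟫ - ψ (Classical.choose hx) - 2⁻¹ * ‖x‖ ^ 2 : ℝ)) : EReal)
    else ⊤, ?_⟩
  intro y hy x hxne
  simp only at hxne ⊢
  have hyx : ∃ z, z ∈ Y ∧ (Z z)⁻¹ • Nv z = (Z y)⁻¹ • Nv y := ⟨y, hy, rfl⟩
  rw [dif_pos hyx]
  have hspec := Classical.choose_spec hyx
  have hyy : Classical.choose hyx = y := hinj hspec.1 hy hspec.2
  rw [hyy]
  by_cases hx : ∃ z, z ∈ Y ∧ (Z z)⁻¹ • Nv z = x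
  · rw [dif_pos hx]
    have hx2 := Classical.choose_spec hx
    set y'' := Classical.choose hx with hy''def
    have hyne : y'' ≠ y := by
      intro hcon
      apply hxne
      rw [← hx2.2, hcon]
    have hseg := (seg y'' hx2.1 y hy hyne).2
    rw [← EReal.coe_add, ← EReal.coe_add, EReal.coe_lt_coe_iff]
    rw [← hx2.2]
    set v : H := (Z y'')⁻¹ • Nv y'' with hvdef
    set w : H := (Z y)⁻¹ • Nv y with hwdef
    have e1 : ‖y - w‖ ^ 2 = ‖y‖ ^ 2 - 2 * ⟪y, w⟫ + ‖w‖ ^ 2 := norm_sub_sq_real y w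
    have e2 : ‖y - v‖ ^ 2 = ‖y‖ ^ 2 - 2 * ⟪y, v⟫ + ‖v‖ ^ 2 := norm_sub_sq_real y v
    have e3 : (⟪y - y'', v⟫ : ℝ) = ⟪y, v⟫ - ⟪y'', v⟫ := inner_sub_left y y'' v
    have e4 : (⟪w, y⟫ : ℝ) = ⟪y, w⟫ := real_inner_comm y w
    have e5 : (⟪v, y''⟫ : ℝ) = ⟪y'', v⟫ := real_inner_comm y'' v
    rw [e1, e2, e4, e5]
    rw [e3] at hseg
    linarith
  · rw [dif_neg hx]
    have h6 : ((2⁻¹ * ‖y - x‖ ^ 2 : ℝ) : EReal) + ⊤ = ⊤ := by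
      rw [EReal.coe_add_top]
    rw [h6, ← EReal.coe_add]
    exact EReal.coe_lt_top _
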